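/- There exists a strictly increasing arithmetic function $f : \mathbb{N} \to \mathbb{N}$ such that $\limsup_{n \to \infty} \frac{\log f(n)}{\log n} = \infty$ and $\liminf_{n \to \infty} \frac{\log f(n)}{\log n} = 1$. -/

import Mathlib

open Filter

/-- `f` is a representation of `n` with parts in `A` and multiplicities in `M`:
`n = ∑ a ∈ A, m_a * a` with each nonzero multiplicity lying in `M`. -/
def IsRepr (A M : Set ℕ) (n : ℕ) (f : ℕ →₀ ℕ) : Prop :=
  (∀ a ∈ f.support, a ∈ A) ∧ (∀ a ∈ f.support, f a ∈ M) ∧ f.sum (fun a m => m * a) = n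

/-- number of partitions of `n` with parts in `A` and multiplicities in `M` -/
noncomputable def pAM (A M : Set ℕ) (n : ℕ) : ℕ :=
  Nat.card {f : ℕ →₀ ℕ // IsRepr A M n f}

/-- number of partitions of `n` with parts in `A` (unrestricted multiplicities) -/
noncomputable def pA (A : Set ℕ) (n : ℕ) : ℕ :=
  pAM A {m | 0 < m} n

/-- counting function of a set of positive integers -/
noncomputable def cnt (S : Set ℕ) (x : ℝ) : ℕ :=
  Nat.card {a : ℕ // a ∈ S ∧ (a : ℝ) ≤ x}


def NN (k : ℕ) : ℕ := 2 ^ (Nat.factorial (k + 1))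

def KK (n : ℕ) : ℕ := Nat.findGreatest (fun k => NN k ≤ n) n

def ff (n : ℕ) : ℕ := if n < 2 then n else NN (KK n) ^ (KK n + 1) + (n - NN (KK n))

lemma NN_two_le (k : ℕ) : 2 ≤ NN k := by
  have : (2:ℕ)^1 ≤ 2 ^ (Nat.factorial (k+1)) :=
    Nat.pow_le_pow_right (by norm_num) (Nat.one_le_iff_ne_zero.2 (Nat.factorial_ne_zero _))
  simpa [NN] using this

lemma NN_strictMono : StrictMono NN := by
  intro a b hab
  exact Nat.pow_lt_pow_right (by norm_num) (Nat.factorial_lt (Nat.succ_pos _) |>.2 (by omega))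

lemma lt_NN (k : ℕ) : k + 1 < NN k := by
  calc k + 1 < 2 ^ (k+1) := Nat.lt_two_pow_self
  _ ≤ NN k := Nat.pow_le_pow_right (by norm_num) (Nat.self_le_factorial _)

lemma NN_pow_le (k : ℕ) : NN k ^ (k + 1) ≤ NN (k + 1) := by
  rw [NN, NN, ← pow_mul]
  refine Nat.pow_le_pow_right (by norm_num) ?_
  rw [Nat.factorial_succ (k+1)]
  nlinarith [Nat.factorial_pos (k+1)]

lemma KK_eq {k n : ℕ} (h1 : NN k ≤ n) (h2 : n < NN (k + 1)) : KK n = k := by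
  have hk_le : k ≤ n := le_trans (by have := lt_NN k; omega) h1
  refine le_antisymm ?_ (Nat.le_findGreatest hk_le h1)
  by_contra h
  push_neg at h
  have h3 : NN (KK n) ≤ n := Nat.findGreatest_spec (P := fun k => NN k ≤ n) hk_le h1
  have : NN (k+1) ≤ NN (KK n) := NN_strictMono.monotone (by omega)
  omega

lemma ff_eq {k n : ℕ} (h1 : NN k ≤ n) (h2 : n < NN (k + 1)) :
    ff n = NN k ^ (k + 1) + (n - NN k) := by
  have h2n : 2 ≤ n := le_trans (NN_two_le k) h1
  rw [ff, if_neg (by omega), KK_eq h1 h2]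

lemma KK_bounds {n : ℕ} (hn : 2 ≤ n) : NN (KK n) ≤ n ∧ n < NN (KK n + 1) := by
  have h0 : NN 0 ≤ n := le_trans (by simp [NN]) hn
  constructor
  · exact Nat.findGreatest_spec (P := fun k => NN k ≤ n) (Nat.zero_le n) h0
  · by_contra h
    push_neg at h
    have : KK n + 1 ≤ KK n :=
      Nat.le_findGreatest (le_trans (by have := lt_NN (KK n + 1); omega) h) h
    omega

lemma ff_step {n : ℕ} (hn : 1 ≤ n) : ff n < ff (n + 1) := by
  rcases eq_or_lt_of_le hn with rfl | h2
  · have : ff 1 = 1 := by simp [ff]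
    have h2 : ff 2 = 2 := by
      have := ff_eq (k := 0) (n := 2) (by simp [NN]) (by norm_num [NN])
      simpa [NN] using this
    show ff 1 < ff 2
    omega
  · have hn2 : 2 ≤ n := h2
    obtain ⟨hlo, hhi⟩ := KK_bounds hn2
    set k := KK n with hk
    rcases lt_or_eq_of_le (Nat.succ_le_of_lt hhi) with hlt | heq
    · -- n+1 < NN (k+1)
      rw [ff_eq hlo hhi, ff_eq (le_trans hlo (Nat.le_succ n)) hlt]
      omega
    · -- n+1 = NN (k+1)
      have hb : n + 1 < NN (k+1+1) := by have := NN_strictMono (show k+1 < k+1+1 by omega); omega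
      have hup : ff (n+1) = NN (k+1) ^ (k+1+1) + (n+1 - NN (k+1)) :=
        ff_eq heq.ge hb
      rw [ff_eq hlo hhi, hup]
      have e1 : NN k ^ (k+1) ≤ NN (k+1) := NN_pow_le k
      have e2 : 2 * NN (k+1) ≤ NN (k+1) ^ 2 := by
        have := NN_two_le (k+1); nlinarith
      have e3 : NN (k+1) ^ 2 ≤ NN (k+1) ^ (k+1+1) :=
        Nat.pow_le_pow_right (by have := NN_two_le (k+1); omega) (by omega)
      have h2k : 2 ≤ NN k := NN_two_le k
      omega

lemma ff_mono : StrictMonoOn ff (Set.Ici 1) := by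
  intro a ha b hb hab
  simp only [Set.mem_Ici] at ha hb
  induction b, hab using Nat.le_induction with
  | base => exact ff_step ha
  | succ b hb ih => exact lt_trans (ih (by omega)) (ff_step (by omega))

lemma ff_ge (n : ℕ) : n ≤ ff n := by
  by_cases h : n < 2
  · simp [ff, h]
  · push_neg at h
    obtain ⟨hlo, hhi⟩ := KK_bounds h
    rw [ff_eq hlo hhi]
    have : NN (KK n) ≤ NN (KK n) ^ (KK n + 1) := Nat.le_self_pow (by omega) _
    omega

lemma ff_NN (k : ℕ) : ff (NN k) = NN k ^ (k + 1) := by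
  rw [ff_eq le_rfl (NN_strictMono (by omega))]; omega

lemma ff_near (k : ℕ) : ff (NN (k+1) - 1) ≤ 4 * (NN (k+1) - 1) := by
  have h1 : NN k < NN (k+1) := NN_strictMono (by omega)
  have h2 : 2 ≤ NN k := NN_two_le k
  have h3 : NN k ^ (k+1) ≤ NN (k+1) := NN_pow_le k
  have h4 : k + 2 < NN (k+1) := lt_NN (k+1)
  rw [ff_eq (k := k) (by omega) (by omega)]
  omega

lemma NN_cast_gt_one (k : ℕ) : (1:ℝ) < (NN k : ℝ) := by
  exact_mod_cast lt_of_lt_of_le one_lt_two (NN_two_le k)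

lemma ratio_at_NN (k : ℕ) :
    Real.log (ff (NN k)) / Real.log (NN k) = (k + 1 : ℝ) := by
  have hL : 0 < Real.log (NN k) := Real.log_pos (NN_cast_gt_one k)
  rw [ff_NN]
  push_cast
  rw [Real.log_pow]
  field_simp
  norm_cast

lemma m_near_ge (k : ℕ) : k + 2 ≤ NN (k+1) - 1 := by
  have := lt_NN (k+1); omega

lemma ratio_near (k : ℕ) :
    Real.log (ff (NN (k+1) - 1)) / Real.log ((NN (k+1) - 1 : ℕ)) ≤
      1 + Real.log 4 / Real.log ((NN (k+1) - 1 : ℕ)) := by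
  set m : ℕ := NN (k+1) - 1 with hm
  have hm2 : 2 ≤ m := le_trans (by omega) (m_near_ge k)
  have hmR : (1:ℝ) < (m:ℝ) := by exact_mod_cast hm2
  have hL : 0 < Real.log m := Real.log_pos hmR
  have hff : (ff m : ℝ) ≤ 4 * (m:ℝ) := by exact_mod_cast ff_near k
  have hffpos : (0:ℝ) < (m:ℝ) := by positivity
  have h1 : Real.log (ff m) ≤ Real.log (4 * (m:ℝ)) := by
    apply Real.log_le_log (by exact_mod_cast lt_of_lt_of_le (by omega) (ff_ge m)) hff
  have h2 : Real.log (4 * (m:ℝ)) = Real.log 4 + Real.log m :=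
    Real.log_mul (by norm_num) (by positivity)
  have h3 : Real.log (ff m) / Real.log m ≤ (Real.log 4 + Real.log m) / Real.log m := by
    rw [← h2]; gcongr
  calc Real.log (ff m) / Real.log m ≤ (Real.log 4 + Real.log m) / Real.log m := h3
  _ = 1 + Real.log 4 / Real.log m := by field_simp; ring

lemma limsup_top :
    limsup (fun m : ℕ => ((Real.log (ff m) / Real.log m : ℝ) : EReal)) atTop = ⊤ := by
  rw [EReal.eq_top_iff_forall_lt]
  intro y
  obtain ⟨c, hc⟩ := exists_nat_gt y
  have hle : ((c:ℝ) : EReal) ≤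
      limsup (fun m : ℕ => ((Real.log (ff m) / Real.log m : ℝ) : EReal)) atTop := by
    apply Filter.le_limsup_of_frequently_le'
    rw [frequently_atTop]
    intro a
    refine ⟨NN (max a c), le_trans (le_max_left a c) (by have := lt_NN (max a c); omega), ?_⟩
    rw [ratio_at_NN]
    have h1 : (c:ℝ) ≤ (max a c : ℕ) + 1 := by
      have h2 : (c:ℕ) ≤ max a c := le_max_right a c
      exact_mod_cast le_trans (Nat.cast_le.2 h2) (by linarith)
    exact_mod_cast h1
  refine lt_of_lt_of_le ?_ hle
  exact_mod_cast hc

lemma log_pos_of_ge {m : ℕ} (hm : 2 ≤ m) : 0 < Real.log m :=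
  Real.log_pos (by exact_mod_cast hm)

lemma liminf_one :
    liminf (fun m : ℕ => Real.log (ff m) / Real.log m) atTop = 1 := by
  set v : ℕ → ℝ := fun m => Real.log (ff m) / Real.log m with hv
  have hv0 : ∀ m, 0 ≤ v m := fun m =>
    div_nonneg (Real.log_natCast_nonneg _) (Real.log_natCast_nonneg _)
  have hbdd : IsBoundedUnder (· ≥ ·) atTop v := ⟨0, eventually_map.2 (Eventually.of_forall hv0)⟩
  have hlow : ∀ᶠ m in atTop, 1 ≤ v m := by
    filter_upwards [eventually_ge_atTop 2] with m hm
    have hL : 0 < Real.log m := log_pos_of_ge hm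
    show 1 ≤ Real.log (ff m) / Real.log m
    rw [one_le_div hL]
    exact Real.log_le_log (by exact_mod_cast lt_of_lt_of_le (by omega) hm)
      (by exact_mod_cast ff_ge m)
  have hfreq2 : ∃ᶠ m in atTop, v m ≤ 2 := by
    rw [frequently_atTop]
    intro a
    refine ⟨NN (a+2+1) - 1, by have := m_near_ge (a+2); omega, ?_⟩
    have hm4 : 4 ≤ NN (a+2+1) - 1 := by have := m_near_ge (a+2); omega
    have hL : 0 < Real.log ((NN (a+2+1) - 1 : ℕ)) := log_pos_of_ge (by omega)
    refine le_trans (ratio_near (a+2)) ?_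
    have h4 : Real.log 4 ≤ Real.log ((NN (a+2+1) - 1 : ℕ)) :=
      Real.log_le_log (by norm_num) (by exact_mod_cast hm4)
    have : Real.log 4 / Real.log ((NN (a+2+1) - 1 : ℕ)) ≤ 1 := by
      rw [div_le_one hL]; exact h4
    linarith
  have hcob : IsCoboundedUnder (· ≥ ·) atTop v := by
    refine ⟨2, fun b hb => ?_⟩
    rw [eventually_map] at hb
    obtain ⟨m, h1, h2⟩ := (hb.and_frequently hfreq2).exists
    exact le_trans h1 h2
  have hup : liminf v atTop ≤ 1 := by
    by_contra hgt
    push_neg at hgt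
    set ε : ℝ := liminf v atTop - 1 with hε
    have hεpos : 0 < ε := by linarith
    have hfr : ∃ᶠ m in atTop, v m ≤ 1 + ε / 2 := by
      rw [frequently_atTop]
      intro a
      obtain ⟨C, hC⟩ := exists_nat_ge (Real.exp (Real.log 4 / (ε / 2)))
      set k : ℕ := a + C + 2 with hk
      refine ⟨NN (k+1) - 1, by have := m_near_ge k; omega, ?_⟩
      set m : ℕ := NN (k+1) - 1 with hm
      have hmk : k + 2 ≤ m := m_near_ge k
      have hL : 0 < Real.log m := log_pos_of_ge (by omega)
      have hCm : (C:ℝ) ≤ (m:ℝ) := by exact_mod_cast (by omega : C ≤ m)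
      have hlog : Real.log 4 / (ε / 2) ≤ Real.log m := by
        rw [Real.le_log_iff_exp_le (by exact_mod_cast (by omega : 0 < m))]
        exact le_trans hC hCm
      have hd : Real.log 4 / Real.log m ≤ ε / 2 := by
        rw [div_le_iff₀ hL]
        calc Real.log 4 = (ε / 2) * (Real.log 4 / (ε / 2)) := by field_simp
        _ ≤ (ε / 2) * Real.log m := by
            exact mul_le_mul_of_nonneg_left hlog (by positivity)
      refine le_trans (ratio_near k) (by linarith)
    have : liminf v atTop ≤ 1 + ε / 2 := liminf_le_of_frequently_le hfr hbdd
    have : liminf v atTop ≤ liminf v atTop - ε / 2 := by rw [hε] at this ⊢; linarith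
    linarith
  exact le_antisymm hup (le_liminf_of_le hcob hlow)


theorem stmt7 :
    ∃ f : ℕ → ℕ, StrictMonoOn f (Set.Ici 1) ∧ (∀ m ≥ 1, 0 < f m) ∧
      limsup (fun m : ℕ => ((Real.log (f m) / Real.log m : ℝ) : EReal)) atTop = ⊤ ∧
      liminf (fun m : ℕ => Real.log (f m) / Real.log m) atTop = 1 := by
  exact ⟨ff, ff_mono, fun m hm => lt_of_lt_of_le hm (ff_ge m), limsup_top, liminf_one⟩
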